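/- arXiv:2002.09051 — 2 statements merged into one kernel-verified Lean document; each statement's English description precedes it below -/
import Mathlib

section
/- Let S_1,...,S_p ⊆ {1,...,n} with |S_k| = d, and let Π_k ∈ {0,1}^{d×n} be the coordinate-extraction matrix with (Π_k z) = z_{S_k}. Define the bilinear convolution map β(z,w) = (wᵀΠ_1 z; ...; wᵀΠ_p z) for z ∈ ℝ^n, w ∈ ℝ^d. Then ‖β(z,w)‖₂ ≤ √(max_{i=1,...,n} |{k : i ∈ S_k}|) · ‖w‖₂ ‖z‖₂. -/
/-- Convolution-type bilinear map: extracting `p` patches of size `d` (given by embeddings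
`e k : Fin d ↪ Fin n`) and taking inner products with a filter `w`, the output satisfies
`‖β(z,w)‖₂ ≤ √(maxᵢ #{k : i ∈ S_k}) ‖w‖₂ ‖z‖₂`. -/
theorem stmt8 {n d p : ℕ} (e : Fin p → (Fin d ↪ Fin n))
    (z : EuclideanSpace ℝ (Fin n)) (w : EuclideanSpace ℝ (Fin d)) :
    ‖(WithLp.equiv 2 (Fin p → ℝ)).symm fun k => ∑ j, w j * z (e k j)‖
      ≤ Real.sqrt (⨆ i : Fin n,
          ((Finset.univ.filter fun k : Fin p => ∃ j, e k j = i).card : ℝ)) * ‖w‖ * ‖z‖ := by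
  set c : Fin n → ℝ := fun i => ((Finset.univ.filter fun k : Fin p => ∃ j, e k j = i).card : ℝ)
    with hc
  set M := ⨆ i : Fin n, c i with hMdef
  rcases Nat.eq_zero_or_pos n with hn | hn
  · -- n = 0
    have : IsEmpty (Fin n) := by subst hn; infer_instance
    have hM : M = 0 := Real.iSup_of_isEmpty _
    have hz : z = 0 := Subsingleton.elim _ _
    have hv : ((WithLp.equiv 2 (Fin p → ℝ)).symm fun k => ∑ j, w j * z (e k j)) = 0 := by
      ext k
      simp [hz]
    rw [hv, hz]
    simp
  · have hMle : ∀ i, c i ≤ M := fun i =>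
      le_ciSup (Set.Finite.bddAbove (Set.finite_range c)) i
    have hM0 : 0 ≤ M := le_trans (Nat.cast_nonneg _) (hMle ⟨0, hn⟩)
    have hw2 : ∑ j, w j ^ 2 = ‖w‖ ^ 2 := by
      rw [EuclideanSpace.norm_eq, Real.sq_sqrt (by positivity)]
      simp [sq_abs]
    have hz2 : ∑ i, z i ^ 2 = ‖z‖ ^ 2 := by
      rw [EuclideanSpace.norm_eq, Real.sq_sqrt (by positivity)]
      simp [sq_abs]
    -- key sum bound
    have key : ∑ k : Fin p, ∑ j : Fin d, z (e k j) ^ 2 ≤ M * ‖z‖ ^ 2 := by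
      have h1 : ∀ k : Fin p, ∑ j : Fin d, z (e k j) ^ 2
          = ∑ i ∈ Finset.univ.filter (fun i => ∃ j, e k j = i), z i ^ 2 := by
        intro k
        have himg : Finset.univ.filter (fun i => ∃ j, e k j = i)
            = Finset.univ.image (e k) := by
          ext i; simp [eq_comm]
        rw [himg, Finset.sum_image (fun a _ b _ h => (e k).injective h)]
      calc ∑ k : Fin p, ∑ j : Fin d, z (e k j) ^ 2
          = ∑ k : Fin p, ∑ i : Fin n, if ∃ j, e k j = i then z i ^ 2 else 0 := by
            simp_rw [h1, Finset.sum_filter]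
        _ = ∑ i : Fin n, ∑ k : Fin p, if ∃ j, e k j = i then z i ^ 2 else 0 :=
            Finset.sum_comm
        _ = ∑ i : Fin n, c i * z i ^ 2 := by
            refine Finset.sum_congr rfl fun i _ => ?_
            rw [← Finset.sum_filter, Finset.sum_const, nsmul_eq_mul, hc]
        _ ≤ ∑ i : Fin n, M * z i ^ 2 :=
            Finset.sum_le_sum fun i _ => mul_le_mul_of_nonneg_right (hMle i) (sq_nonneg _)
        _ = M * ‖z‖ ^ 2 := by rw [← Finset.mul_sum, hz2]
    have main : ∑ k : Fin p, (∑ j, w j * z (e k j)) ^ 2 ≤ M * (‖w‖ * ‖z‖) ^ 2 := by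
      calc ∑ k : Fin p, (∑ j, w j * z (e k j)) ^ 2
          ≤ ∑ k : Fin p, (∑ j, w j ^ 2) * (∑ j, z (e k j) ^ 2) :=
            Finset.sum_le_sum fun k _ => Finset.sum_mul_sq_le_sq_mul_sq _ _ _
        _ = ‖w‖ ^ 2 * ∑ k : Fin p, ∑ j, z (e k j) ^ 2 := by
            rw [← Finset.mul_sum, hw2]
        _ ≤ ‖w‖ ^ 2 * (M * ‖z‖ ^ 2) :=
            mul_le_mul_of_nonneg_left key (by positivity)
        _ = M * (‖w‖ * ‖z‖) ^ 2 := by ring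
    have hnorm : ‖(WithLp.equiv 2 (Fin p → ℝ)).symm fun k => ∑ j, w j * z (e k j)‖
        = Real.sqrt (∑ k : Fin p, (∑ j, w j * z (e k j)) ^ 2) := by
      rw [EuclideanSpace.norm_eq]
      simp [sq_abs]
    rw [hnorm]
    calc Real.sqrt (∑ k : Fin p, (∑ j, w j * z (e k j)) ^ 2)
        ≤ Real.sqrt (M * (‖w‖ * ‖z‖) ^ 2) := Real.sqrt_le_sqrt main
      _ = Real.sqrt M * ‖w‖ * ‖z‖ := by
          rw [Real.sqrt_mul hM0, Real.sqrt_sq (by positivity), mul_assoc]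
end

section
/- Let ζ: ℝ^a × ℝ^b → ℝ be twice continuously differentiable such that ζ(α,·) is μ-strongly convex for every α, with L-Lipschitz gradient and H-Lipschitz Hessian. Let g(α) = argmin_β ζ(α,β). Then g is Lipschitz with constant at most L/μ. -/
set_option maxHeartbeats 1000000

/-- Quadratic growth of a strongly convex function at its minimizer. -/
lemma stmt17_quad_growth {b : ℕ} {μ : ℝ} (f : EuclideanSpace ℝ (Fin b) → ℝ)
    (hsc : StrongConvexOn Set.univ μ f) (m : EuclideanSpace ℝ (Fin b))
    (hm : IsMinOn f Set.univ m) (y : EuclideanSpace ℝ (Fin b)) :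
    f m + μ / 2 * ‖y - m‖ ^ 2 ≤ f y := by
  have h1 : ∀ t : ℝ, t ∈ Set.Ioo (0 : ℝ) 1 →
      f m + (1 - t) * (μ / 2 * ‖y - m‖ ^ 2) ≤ f y := by
    intro t ht
    have hcvx : f (t • y + (1 - t) • m) ≤
        t * f y + (1 - t) * f m - t * (1 - t) * (μ / 2 * ‖y - m‖ ^ 2) := by
      simpa [smul_eq_mul] using hsc.2 (Set.mem_univ y) (Set.mem_univ m)
        (show (0:ℝ) ≤ t from le_of_lt ht.1) (show (0:ℝ) ≤ 1 - t by linarith [ht.2])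
        (show t + (1 - t) = 1 by ring)
    have hmm : f m ≤ f (t • y + (1 - t) • m) := hm (Set.mem_univ _)
    nlinarith [ht.1, ht.2]
  have tlim : Filter.Tendsto (fun t : ℝ => f m + (1 - t) * (μ / 2 * ‖y - m‖ ^ 2))
      (nhdsWithin 0 (Set.Ioi 0)) (nhds (f m + μ / 2 * ‖y - m‖ ^ 2)) := by
    have : Filter.Tendsto (fun t : ℝ => f m + (1 - t) * (μ / 2 * ‖y - m‖ ^ 2))
        (nhds 0) (nhds (f m + (1 - 0) * (μ / 2 * ‖y - m‖ ^ 2))) := by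
      apply Filter.Tendsto.add tendsto_const_nhds
      exact (Filter.Tendsto.sub tendsto_const_nhds Filter.tendsto_id).mul tendsto_const_nhds
    simpa using this.mono_left nhdsWithin_le_nhds
  refine le_of_tendsto tlim ?_
  filter_upwards [Ioo_mem_nhdsGT_of_mem (Set.mem_Ico.2 ⟨le_refl (0:ℝ), one_pos⟩)] with t ht
  exact h1 t ht

/-- If `ζ(α,·)` is `μ`-strongly convex for every `α`, `ζ` has an `L`-Lipschitz gradient and
an `H`-Lipschitz Hessian, then `g(α) = argmin_β ζ(α,β)` is `(L/μ)`-Lipschitz. -/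
theorem stmt17 {a b : ℕ} (μ L H : ℝ) (hμ : 0 < μ)
    (ζ : WithLp 2 (EuclideanSpace ℝ (Fin a) × EuclideanSpace ℝ (Fin b)) → ℝ)
    (hC : ContDiff ℝ 2 ζ)
    (hsc : ∀ α : EuclideanSpace ℝ (Fin a),
      StrongConvexOn Set.univ μ fun β : EuclideanSpace ℝ (Fin b) =>
        ζ ((WithLp.equiv 2 _).symm (α, β)))
    (hL : ∀ x y, ‖fderiv ℝ ζ x - fderiv ℝ ζ y‖ ≤ L * ‖x - y‖)
    (hH : ∀ x y, ‖fderiv ℝ (fderiv ℝ ζ) x - fderiv ℝ (fderiv ℝ ζ) y‖ ≤ H * ‖x - y‖)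
    (g : EuclideanSpace ℝ (Fin a) → EuclideanSpace ℝ (Fin b))
    (hg : ∀ α, IsMinOn (fun β : EuclideanSpace ℝ (Fin b) =>
      ζ ((WithLp.equiv 2 _).symm (α, β))) Set.univ (g α)) :
    ∀ α α', ‖g α - g α'‖ ≤ (L / μ) * ‖α - α'‖ := by
  intro α α'
  set u := g α with hu
  set v := g α' with hv
  set ι : EuclideanSpace ℝ (Fin a) → EuclideanSpace ℝ (Fin b) →
      WithLp 2 (EuclideanSpace ℝ (Fin a) × EuclideanSpace ℝ (Fin b)) :=
    fun A β => (WithLp.equiv 2 _).symm (A, β) with hι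
  -- quadratic growth at each minimizer
  have h1 : ζ (ι α u) + μ / 2 * ‖v - u‖ ^ 2 ≤ ζ (ι α v) :=
    stmt17_quad_growth _ (hsc α) u (hg α) v
  have h2 : ζ (ι α' v) + μ / 2 * ‖u - v‖ ^ 2 ≤ ζ (ι α' u) :=
    stmt17_quad_growth _ (hsc α') v (hg α') u
  -- the embedding β ↦ (A, β) and its derivative
  set J : EuclideanSpace ℝ (Fin b) →L[ℝ]
      WithLp 2 (EuclideanSpace ℝ (Fin a) × EuclideanSpace ℝ (Fin b)) :=
    ((WithLp.prodContinuousLinearEquiv 2 ℝ (EuclideanSpace ℝ (Fin a))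
        (EuclideanSpace ℝ (Fin b))).symm.toContinuousLinearMap).comp
      (ContinuousLinearMap.inr ℝ _ _) with hJ
  have hJnorm : ‖J‖ ≤ 1 := by
    refine ContinuousLinearMap.opNorm_le_bound _ zero_le_one fun x => ?_
    have : ‖J x‖ ^ 2 = ‖(J x).fst‖ ^ 2 + ‖(J x).snd‖ ^ 2 :=
      WithLp.prod_norm_sq_eq_of_L2 _
    have hfst : (J x).fst = 0 := rfl
    have hsnd : (J x).snd = x := rfl
    rw [hfst, hsnd] at this
    simp only [norm_zero] at this
    rw [one_mul]
    nlinarith [norm_nonneg (J x), norm_nonneg x]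
  have hder : ∀ (A : EuclideanSpace ℝ (Fin a)) (β : EuclideanSpace ℝ (Fin b)),
      HasFDerivAt (fun β => ζ (ι A β)) ((fderiv ℝ ζ (ι A β)).comp J) β := by
    intro A β
    have hemb : HasFDerivAt (fun β => ι A β) J β := by
      have heq : (fun β : EuclideanSpace ℝ (Fin b) => ι A β) =
          fun β => ι A 0 + J β := by
        funext β
        show WithLp.toLp 2 (A, β) = WithLp.toLp 2 (A, (0 : EuclideanSpace ℝ (Fin b)))
          + WithLp.toLp 2 ((0 : EuclideanSpace ℝ (Fin a)), β)
        rw [← WithLp.toLp_add]; simp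
      rw [heq]
      exact J.hasFDerivAt.const_add (ι A 0)
    exact ((hC.differentiable (by norm_num) (ι A β)).hasFDerivAt).comp β hemb
  -- difference function and mean value inequality
  set h : EuclideanSpace ℝ (Fin b) → ℝ := fun β => ζ (ι α β) - ζ (ι α' β) with hh
  have hdiff : ∀ β, ‖ι α β - ι α' β‖ = ‖α - α'‖ := by
    intro β
    have hsq : ‖ι α β - ι α' β‖ ^ 2 =
        ‖(ι α β - ι α' β).fst‖ ^ 2 + ‖(ι α β - ι α' β).snd‖ ^ 2 :=
      WithLp.prod_norm_sq_eq_of_L2 _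
    have hfst : (ι α β - ι α' β).fst = α - α' := rfl
    have hsnd : (ι α β - ι α' β).snd = 0 := by show β - β = 0; simp
    rw [hfst, hsnd] at hsq
    simp only [norm_zero] at hsq
    nlinarith [norm_nonneg (ι α β - ι α' β), norm_nonneg (α - α')]
  have hmvt : ‖h v - h u‖ ≤ L * ‖α - α'‖ * ‖v - u‖ := by
    refine Convex.norm_image_sub_le_of_norm_hasFDerivWithin_le
      (f := h) (f' := fun β => (fderiv ℝ ζ (ι α β)).comp J - (fderiv ℝ ζ (ι α' β)).comp J)
      (fun β _ => (((hder α β).sub (hder α' β))).hasFDerivWithinAt)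
      (fun β _ => ?_) convex_univ (Set.mem_univ u) (Set.mem_univ v)
    have : (fderiv ℝ ζ (ι α β)).comp J - (fderiv ℝ ζ (ι α' β)).comp J =
        (fderiv ℝ ζ (ι α β) - fderiv ℝ ζ (ι α' β)).comp J := by
      ext x; simp
    show ‖(fderiv ℝ ζ (ι α β)).comp J - (fderiv ℝ ζ (ι α' β)).comp J‖ ≤ L * ‖α - α'‖
    rw [this]
    calc ‖(fderiv ℝ ζ (ι α β) - fderiv ℝ ζ (ι α' β)).comp J‖
        ≤ ‖fderiv ℝ ζ (ι α β) - fderiv ℝ ζ (ι α' β)‖ * ‖J‖ :=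
          ContinuousLinearMap.opNorm_comp_le _ _
      _ ≤ (L * ‖ι α β - ι α' β‖) * 1 := by
          have hnn : (0:ℝ) ≤ ‖fderiv ℝ ζ (ι α β) - fderiv ℝ ζ (ι α' β)‖ := norm_nonneg _
          exact mul_le_mul (hL _ _) hJnorm (norm_nonneg _)
            (le_trans hnn (hL _ _))
      _ = L * ‖α - α'‖ := by rw [mul_one, hdiff]
  -- combine
  have hkey : μ * ‖u - v‖ ^ 2 ≤ L * ‖α - α'‖ * ‖u - v‖ := by
    have hvu : ‖v - u‖ = ‖u - v‖ := norm_sub_rev _ _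
    have habs : h v - h u ≤ ‖h v - h u‖ := le_abs_self _
    rw [hvu] at h1 hmvt
    simp only [hh] at habs hmvt
    nlinarith [h1, h2, hmvt, habs]
  have hLpos : 0 ≤ L * ‖α - α'‖ := by
    rcases eq_or_ne α α' with rfl | hne
    · simp
    · have := (norm_nonneg (fderiv ℝ ζ (ι α 0) - fderiv ℝ ζ (ι α' 0))).trans (hL (ι α 0) (ι α' 0))
      rw [hdiff] at this
      exact this
  rcases eq_or_lt_of_le (norm_nonneg (u - v)) with hz | hz
  · rw [← hz]
    rw [div_mul_eq_mul_div]
    positivity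
  · rw [div_mul_eq_mul_div, le_div_iff₀ hμ]
    nlinarith [hkey, hz]
end
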